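/- Let L_d : R^n × R^n → R be C¹ and suppose L_d is invariant under a one-parameter group of translations: L_d(q0 + s ξ, q1 + s ξ) = L_d(q0, q1) for all s ∈ R and a fixed ξ ∈ R^n. Suppose further the discrete forces do no work along ξ: ⟨f_d^+(q0,q1), ξ⟩ + ⟨f_d^-(q0,q1), ξ⟩ = 0 for all (q0,q1). Then along any solution of the forced discrete Euler-Lagrange equations, the momentum component ⟨p_k, ξ⟩ is conserved, where p_k = D_2 L_d(q_{k-1},q_k) + f_d^+(q_{k-1},q_k). -/

import Mathlib

open InnerProductSpace

section aux

variable {E : Type*} [NormedAddCommGroup E] [InnerProductSpace ℝ E] [CompleteSpace E]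

lemma inner_gradient_eq_fderiv (f : E → ℝ) (x ξ : E) :
    (inner ℝ (gradient f x) ξ : ℝ) = fderiv ℝ f x ξ := by
  unfold gradient
  rw [toDual_symm_apply]

end aux

/-- Key lemma: translation invariance implies the sum of partial gradients
pairs to zero with ξ. -/
lemma noether_key (n : ℕ)
    (Ld : EuclideanSpace ℝ (Fin n) → EuclideanSpace ℝ (Fin n) → ℝ)
    (hLd : ContDiff ℝ 1 (fun x :
      EuclideanSpace ℝ (Fin n) × EuclideanSpace ℝ (Fin n) => Ld x.1 x.2))
    (ξ : EuclideanSpace ℝ (Fin n))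
    (hinv : ∀ (q₀ q₁ : EuclideanSpace ℝ (Fin n)) (s : ℝ),
      Ld (q₀ + s • ξ) (q₁ + s • ξ) = Ld q₀ q₁)
    (q₀ q₁ : EuclideanSpace ℝ (Fin n)) :
    (inner ℝ (gradient (fun x => Ld x q₁) q₀) ξ : ℝ)
      + inner ℝ (gradient (fun y => Ld q₀ y) q₁) ξ = 0 := by
  set f : EuclideanSpace ℝ (Fin n) × EuclideanSpace ℝ (Fin n) → ℝ :=
    fun x => Ld x.1 x.2 with hf
  have hdiff : Differentiable ℝ f := hLd.differentiable one_ne_zero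
  have hF : HasFDerivAt f (fderiv ℝ f (q₀, q₁)) (q₀, q₁) :=
    (hdiff (q₀, q₁)).hasFDerivAt
  set F := fderiv ℝ f (q₀, q₁) with hFdef
  -- the curve s ↦ (q₀ + s•ξ, q₁ + s•ξ)
  have hc : HasDerivAt (fun s : ℝ => ((q₀, q₁) : EuclideanSpace ℝ (Fin n) ×
      EuclideanSpace ℝ (Fin n)) + s • (ξ, ξ)) ((ξ, ξ)) 0 := by
    simpa using ((hasDerivAt_id (0 : ℝ)).smul_const
      ((ξ, ξ) : EuclideanSpace ℝ (Fin n) × EuclideanSpace ℝ (Fin n))).const_add (q₀, q₁)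
  have hcomp : HasDerivAt (fun s : ℝ => f ((q₀, q₁) + s • (ξ, ξ))) (F (ξ, ξ)) 0 := by
    have hF' : HasFDerivAt f F ((q₀, q₁) + (0:ℝ) • (ξ, ξ)) := by simpa using hF
    exact hF'.comp_hasDerivAt 0 hc
  have hconst : (fun s : ℝ => f ((q₀, q₁) + s • (ξ, ξ))) = fun _ => Ld q₀ q₁ := by
    funext s
    simp [hf, Prod.smul_mk, hinv q₀ q₁ s]
  have hzero : F (ξ, ξ) = 0 := by
    have h0 : HasDerivAt (fun _ : ℝ => Ld q₀ q₁) (0 : ℝ) 0 := hasDerivAt_const _ _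
    have := hcomp.unique (hconst ▸ h0)
    simpa using this
  -- partial derivatives
  have h1 : HasFDerivAt (fun x => Ld x q₁)
      (F.comp ((ContinuousLinearMap.id ℝ _).prod 0)) q₀ := by
    have hg : HasFDerivAt (fun x : EuclideanSpace ℝ (Fin n) => (x, q₁))
        ((ContinuousLinearMap.id ℝ _).prod 0) q₀ :=
      HasFDerivAt.prodMk (hasFDerivAt_id q₀) (hasFDerivAt_const q₁ q₀)
    exact hF.comp q₀ hg
  have h2 : HasFDerivAt (fun y => Ld q₀ y)
      (F.comp ((0 : EuclideanSpace ℝ (Fin n) →L[ℝ] EuclideanSpace ℝ (Fin n)).prod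
        (ContinuousLinearMap.id ℝ _))) q₁ := by
    have hg : HasFDerivAt (fun y : EuclideanSpace ℝ (Fin n) => (q₀, y))
        ((0 : EuclideanSpace ℝ (Fin n) →L[ℝ] EuclideanSpace ℝ (Fin n)).prod
          (ContinuousLinearMap.id ℝ _)) q₁ :=
      HasFDerivAt.prodMk (hasFDerivAt_const q₀ q₁) (hasFDerivAt_id q₁)
    exact hF.comp q₁ hg
  rw [inner_gradient_eq_fderiv, inner_gradient_eq_fderiv, h1.fderiv, h2.fderiv]
  have : F (ξ, 0) + F (0, ξ) = 0 := by
    rw [← map_add]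
    simpa using hzero
  simpa using this

/-- Forced discrete Noether theorem for translation symmetries: if the discrete
Lagrangian is invariant under translations by ξ and the discrete forces do no
work along ξ, then the ξ-component of the discrete momentum
p_k = D₂L_d(q_{k-1},q_k) + f_d^+(q_{k-1},q_k) is conserved along solutions of
the forced discrete Euler--Lagrange equations. -/
theorem forced_discrete_noether_translation
    (n : ℕ)
    (Ld : EuclideanSpace ℝ (Fin n) → EuclideanSpace ℝ (Fin n) → ℝ)
    (hLd : ContDiff ℝ 1 (fun x :
      EuclideanSpace ℝ (Fin n) × EuclideanSpace ℝ (Fin n) => Ld x.1 x.2))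
    (fdp fdm : EuclideanSpace ℝ (Fin n) → EuclideanSpace ℝ (Fin n) →
      EuclideanSpace ℝ (Fin n))
    (ξ : EuclideanSpace ℝ (Fin n))
    -- translation invariance of the discrete Lagrangian
    (hinv : ∀ (q₀ q₁ : EuclideanSpace ℝ (Fin n)) (s : ℝ),
      Ld (q₀ + s • ξ) (q₁ + s • ξ) = Ld q₀ q₁)
    -- the discrete forces do no work along ξ
    (hwork : ∀ q₀ q₁, (inner ℝ (fdp q₀ q₁) ξ : ℝ) + (inner ℝ (fdm q₀ q₁) ξ : ℝ) = 0)
    (q : ℕ → EuclideanSpace ℝ (Fin n))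
    -- forced discrete Euler--Lagrange equations
    (hDEL : ∀ k : ℕ,
      gradient (fun y => Ld (q k) y) (q (k + 1)) + fdp (q k) (q (k + 1)) +
      gradient (fun x => Ld x (q (k + 2))) (q (k + 1)) +
      fdm (q (k + 1)) (q (k + 2)) = 0) :
    ∀ k : ℕ,
      (inner ℝ (gradient (fun y => Ld (q (k + 1)) y) (q (k + 2)) +
        fdp (q (k + 1)) (q (k + 2))) ξ : ℝ) =
      (inner ℝ (gradient (fun y => Ld (q k) y) (q (k + 1)) +
        fdp (q k) (q (k + 1))) ξ : ℝ) := by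
  intro k
  have hdel := congrArg (fun v => (inner ℝ v ξ : ℝ)) (hDEL k)
  simp only [inner_add_left, inner_zero_left] at hdel ⊢
  have hkey := noether_key n Ld hLd ξ hinv (q (k + 1)) (q (k + 2))
  have hw := hwork (q (k + 1)) (q (k + 2))
  linarith
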